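/- For a nondegenerate triangle with angles (θ_0, θ_1, θ_2) in the open simplex Ω, edge lengths l_0, l_1, l_2, and area S > 0, the expression W = (1/(2S)) [ l_1² sin²θ_1 (l_2^β − l_1^β)(θ_0 − θ_1)(π − θ_2) + l_0² sin²θ_0 (l_0^β − l_1^β)(θ_0 − θ_2)(π − θ_1) + l_2² sin²θ_2 (l_0^β − l_2^β)(θ_1 − θ_2)(π − θ_0) ] satisfies W ≤ 0, with equality if and only if θ_0 = θ_1 = θ_2 = π/3. -/

import Mathlib

open Real

lemma sin_lt_sin_of (a b : ℝ) (ha : 0 < a) (hb : b < π) (hab : a + b < π) (h : a < b) :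
    Real.sin a < Real.sin b := by
  have h1 : Real.sin b - Real.sin a = 2 * Real.sin ((b - a) / 2) * Real.cos ((b + a) / 2) :=
    Real.sin_sub_sin b a
  have hs : 0 < Real.sin ((b - a) / 2) :=
    Real.sin_pos_of_pos_of_lt_pi (by linarith) (by linarith [Real.pi_pos])
  have hcos : 0 < Real.cos ((b + a) / 2) :=
    Real.cos_pos_of_mem_Ioo ⟨by nlinarith [Real.pi_pos], by linarith⟩
  nlinarith

lemma ksin_lt_iff (k : ℝ) (hk : 0 < k) (a b : ℝ) (ha : 0 < a) (ha' : a < π)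
    (hb : 0 < b) (hb' : b < π) (hab : a + b < π) :
    k * Real.sin a < k * Real.sin b ↔ a < b := by
  rw [mul_lt_mul_iff_right₀ hk]
  constructor
  · intro h
    by_contra hc
    push_neg at hc
    rcases eq_or_lt_of_le hc with h' | h'
    · rw [h'] at h; exact lt_irrefl _ h
    · exact absurd h (not_lt.mpr (sin_lt_sin_of b a hb ha' (by linarith) h').le)
  · exact fun h => sin_lt_sin_of a b ha hb' hab h

lemma aux_sign (β : ℝ) (hβ : 0 < β) (x y a b : ℝ) (hx : 0 < x) (hy : 0 < y)
    (h1 : x < y ↔ b < a) (h2 : y < x ↔ a < b) :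
    (x ^ β - y ^ β) * (a - b) ≤ 0 ∧ ((x ^ β - y ^ β) * (a - b) = 0 ↔ a = b) := by
  rcases lt_trichotomy a b with h | h | h
  · have hxy : y < x := h2.mpr h
    have hp : y ^ β < x ^ β := Real.rpow_lt_rpow hy.le hxy hβ
    refine ⟨by nlinarith, ⟨fun he => by nlinarith, fun he => by linarith⟩⟩
  · subst h; simp
  · have hxy : x < y := h1.mpr h
    have hp : x ^ β < y ^ β := Real.rpow_lt_rpow hx.le hxy hβ
    refine ⟨by nlinarith, ⟨fun he => by nlinarith, fun he => by linarith⟩⟩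

theorem stmt13 (β : ℝ) (hβ : 0 < β) (t0 t1 t2 l0 l1 l2 S : ℝ)
    (hsum : t0 + t1 + t2 = π)
    (ht0 : 0 < t0) (ht0' : t0 < π) (ht1 : 0 < t1) (ht1' : t1 < π)
    (ht2 : 0 < t2) (ht2' : t2 < π)
    (hl0 : 0 < l0) (hl1 : 0 < l1) (hl2 : 0 < l2)
    (hS : S = 1 / 2 * l0 * l2 * Real.sin t0) (hSpos : 0 < S)
    (hlaw1 : l0 / Real.sin t2 = l1 / Real.sin t0)
    (hlaw2 : l1 / Real.sin t0 = l2 / Real.sin t1) :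
    (1 / (2 * S)) * (l1 ^ 2 * Real.sin t1 ^ 2 * (l2 ^ β - l1 ^ β) * (t0 - t1) * (π - t2)
        + l0 ^ 2 * Real.sin t0 ^ 2 * (l0 ^ β - l1 ^ β) * (t0 - t2) * (π - t1)
        + l2 ^ 2 * Real.sin t2 ^ 2 * (l0 ^ β - l2 ^ β) * (t1 - t2) * (π - t0)) ≤ 0 ∧
    ((1 / (2 * S)) * (l1 ^ 2 * Real.sin t1 ^ 2 * (l2 ^ β - l1 ^ β) * (t0 - t1) * (π - t2)
        + l0 ^ 2 * Real.sin t0 ^ 2 * (l0 ^ β - l1 ^ β) * (t0 - t2) * (π - t1)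
        + l2 ^ 2 * Real.sin t2 ^ 2 * (l0 ^ β - l2 ^ β) * (t1 - t2) * (π - t0)) = 0
      ↔ (t0 = π / 3 ∧ t1 = π / 3 ∧ t2 = π / 3)) := by
  have hs0 : 0 < Real.sin t0 := Real.sin_pos_of_pos_of_lt_pi ht0 ht0'
  have hs1 : 0 < Real.sin t1 := Real.sin_pos_of_pos_of_lt_pi ht1 ht1'
  have hs2 : 0 < Real.sin t2 := Real.sin_pos_of_pos_of_lt_pi ht2 ht2'
  set k : ℝ := l1 / Real.sin t0 with hkdef
  have hk : 0 < k := div_pos hl1 hs0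
  have e1 : l1 = k * Real.sin t0 := by rw [hkdef, div_mul_cancel₀ _ hs0.ne']
  have e0 : l0 = k * Real.sin t2 := by
    rw [hkdef]; field_simp
    rw [div_eq_div_iff hs2.ne' hs0.ne'] at hlaw1
    linarith
  have e2 : l2 = k * Real.sin t1 := by
    rw [hkdef]; field_simp
    rw [div_eq_div_iff hs0.ne' hs1.ne'] at hlaw2
    linarith
  -- sign facts for the three products
  have A1 := aux_sign β hβ l2 l1 t0 t1 hl2 hl1
    (by rw [e2, e1]; exact ksin_lt_iff k hk t1 t0 ht1 ht1' ht0 ht0' (by linarith))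
    (by rw [e2, e1]; exact ksin_lt_iff k hk t0 t1 ht0 ht0' ht1 ht1' (by linarith))
  have A2 := aux_sign β hβ l0 l1 t0 t2 hl0 hl1
    (by rw [e0, e1]; exact ksin_lt_iff k hk t2 t0 ht2 ht2' ht0 ht0' (by linarith))
    (by rw [e0, e1]; exact ksin_lt_iff k hk t0 t2 ht0 ht0' ht2 ht2' (by linarith))
  have A3 := aux_sign β hβ l0 l2 t1 t2 hl0 hl2
    (by rw [e0, e2]; exact ksin_lt_iff k hk t2 t1 ht2 ht2' ht1 ht1' (by linarith))
    (by rw [e0, e2]; exact ksin_lt_iff k hk t1 t2 ht1 ht1' ht2 ht2' (by linarith))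
  have hc1 : 0 < l1 ^ 2 * Real.sin t1 ^ 2 * (π - t2) :=
    mul_pos (mul_pos (pow_pos hl1 2) (pow_pos hs1 2)) (by linarith)
  have hc2 : 0 < l0 ^ 2 * Real.sin t0 ^ 2 * (π - t1) :=
    mul_pos (mul_pos (pow_pos hl0 2) (pow_pos hs0 2)) (by linarith)
  have hc3 : 0 < l2 ^ 2 * Real.sin t2 ^ 2 * (π - t0) :=
    mul_pos (mul_pos (pow_pos hl2 2) (pow_pos hs2 2)) (by linarith)
  have eq1 : l1 ^ 2 * Real.sin t1 ^ 2 * (l2 ^ β - l1 ^ β) * (t0 - t1) * (π - t2)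
      = (l1 ^ 2 * Real.sin t1 ^ 2 * (π - t2)) * ((l2 ^ β - l1 ^ β) * (t0 - t1)) := by ring
  have eq2 : l0 ^ 2 * Real.sin t0 ^ 2 * (l0 ^ β - l1 ^ β) * (t0 - t2) * (π - t1)
      = (l0 ^ 2 * Real.sin t0 ^ 2 * (π - t1)) * ((l0 ^ β - l1 ^ β) * (t0 - t2)) := by ring
  have eq3 : l2 ^ 2 * Real.sin t2 ^ 2 * (l0 ^ β - l2 ^ β) * (t1 - t2) * (π - t0)
      = (l2 ^ 2 * Real.sin t2 ^ 2 * (π - t0)) * ((l0 ^ β - l2 ^ β) * (t1 - t2)) := by ring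
  have hT1 : l1 ^ 2 * Real.sin t1 ^ 2 * (l2 ^ β - l1 ^ β) * (t0 - t1) * (π - t2) ≤ 0 := by
    rw [eq1]; exact mul_nonpos_of_nonneg_of_nonpos hc1.le A1.1
  have hT2 : l0 ^ 2 * Real.sin t0 ^ 2 * (l0 ^ β - l1 ^ β) * (t0 - t2) * (π - t1) ≤ 0 := by
    rw [eq2]; exact mul_nonpos_of_nonneg_of_nonpos hc2.le A2.1
  have hT3 : l2 ^ 2 * Real.sin t2 ^ 2 * (l0 ^ β - l2 ^ β) * (t1 - t2) * (π - t0) ≤ 0 := by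
    rw [eq3]; exact mul_nonpos_of_nonneg_of_nonpos hc3.le A3.1
  have hcS : 0 < 1 / (2 * S) := by positivity
  constructor
  · exact mul_nonpos_of_nonneg_of_nonpos hcS.le (by linarith)
  · constructor
    · intro hW
      have hsum0 : l1 ^ 2 * Real.sin t1 ^ 2 * (l2 ^ β - l1 ^ β) * (t0 - t1) * (π - t2)
          + l0 ^ 2 * Real.sin t0 ^ 2 * (l0 ^ β - l1 ^ β) * (t0 - t2) * (π - t1)
          + l2 ^ 2 * Real.sin t2 ^ 2 * (l0 ^ β - l2 ^ β) * (t1 - t2) * (π - t0) = 0 := by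
        rcases mul_eq_zero.mp hW with h | h
        · exact absurd h hcS.ne'
        · exact h
      have z1 : l1 ^ 2 * Real.sin t1 ^ 2 * (l2 ^ β - l1 ^ β) * (t0 - t1) * (π - t2) = 0 := by
        linarith
      have z2 : l0 ^ 2 * Real.sin t0 ^ 2 * (l0 ^ β - l1 ^ β) * (t0 - t2) * (π - t1) = 0 := by
        linarith
      rw [eq1] at z1
      rw [eq2] at z2
      have p1 : (l2 ^ β - l1 ^ β) * (t0 - t1) = 0 :=
        (mul_eq_zero.mp z1).resolve_left hc1.ne'
      have p2 : (l0 ^ β - l1 ^ β) * (t0 - t2) = 0 :=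
        (mul_eq_zero.mp z2).resolve_left hc2.ne'
      have e01 : t0 = t1 := A1.2.mp p1
      have e02 : t0 = t2 := A2.2.mp p2
      refine ⟨by linarith, by linarith, by linarith⟩
    · rintro ⟨h0, h1, h2⟩
      rw [h0, h1, h2]
      ring
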